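/- For a regular scale factor a, the Fermi radius ρ_{M_τ} = ∫_0^τ a(t)/√(a(τ)²−a(t)²) dt satisfies ρ_{M_τ} ≤ (π/2)·a(τ)/a'(τ), i.e. ρ_{M_τ} ≤ (π/2)·(1/H(τ)) where H(τ)=a'(τ)/a(τ). -/

import Mathlib

open Set MeasureTheory Filter Topology


/-- The Fermi radius is bounded by `(π/2) / H(τ)` for a regular scale factor. -/
theorem fermi_radius_bound (a : ℝ → ℝ)
    (ha0 : a 0 = 0)
    (hmono : StrictMonoOn a (Set.Ici 0))
    (hcont : ContinuousOn a (Set.Ici 0))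
    (hsmooth : ContDiffOn ℝ 2 a (Set.Ioi 0))
    (hreg : ∀ t > (0:ℝ), a t * deriv (deriv a) t / (deriv a t) ^ 2 ≤ 1) :
    ∀ τ > (0:ℝ),
      (∫ t in (0:ℝ)..τ, a t / Real.sqrt ((a τ) ^ 2 - (a t) ^ 2)) ≤
        (Real.pi / 2) * (a τ / deriv a τ) := by
  -- differentiability facts
  have hdiff : ∀ t : ℝ, 0 < t → DifferentiableAt ℝ a t := fun t ht =>
    (hsmooth.differentiableOn (by norm_num)).differentiableAt (isOpen_Ioi.mem_nhds ht)
  have hderiv_cd : ContDiffOn ℝ 1 (deriv a) (Set.Ioi 0) :=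
    hsmooth.deriv_of_isOpen isOpen_Ioi (by norm_num)
  have hdcont : ContinuousOn (deriv a) (Set.Ioi 0) := hderiv_cd.continuousOn
  have hddiff : ∀ t : ℝ, 0 < t → DifferentiableAt ℝ (deriv a) t := fun t ht =>
    (hderiv_cd.differentiableOn (by norm_num)).differentiableAt (isOpen_Ioi.mem_nhds ht)
  have apos : ∀ t : ℝ, 0 < t → 0 < a t := by
    intro t ht
    have := hmono (le_refl (0:ℝ)) ht.le ht
    rwa [ha0] at this
  have anonneg : ∀ t : ℝ, 0 ≤ t → 0 ≤ a t := by
    intro t ht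
    rcases eq_or_lt_of_le ht with h | h
    · rw [← h, ha0]
    · exact (apos t h).le
  -- deriv a ≥ 0
  have dnonneg : ∀ t : ℝ, 0 < t → 0 ≤ deriv a t := by
    intro t ht
    have h1 : Tendsto (slope a t) (𝓝[≠] t) (𝓝 (deriv a t)) :=
      hasDerivAt_iff_tendsto_slope.1 (hdiff t ht).hasDerivAt
    have h2 : Tendsto (slope a t) (𝓝[>] t) (𝓝 (deriv a t)) :=
      h1.mono_left (nhdsWithin_mono t fun y hy => ne_of_gt hy)
    refine ge_of_tendsto h2 ?_
    filter_upwards [self_mem_nhdsWithin] with y hy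
    have hy' : t < y := hy
    have := hmono ht.le (le_of_lt (lt_trans ht hy')) hy'
    rw [slope_def_field]
    exact div_nonneg (by linarith) (by linarith)
  -- in any subinterval there is a point of positive derivative
  have hexists : ∀ s t : ℝ, 0 < s → s < t → ∃ u, u ∈ Set.Ioo s t ∧ 0 < deriv a u := by
    intro s t hs hst
    obtain ⟨c, hc, hc'⟩ := exists_hasDerivAt_eq_slope a (deriv a) hst
      (hcont.mono fun x hx => le_trans hs.le hx.1)
      (fun x hx => (hdiff x (lt_trans hs hx.1)).hasDerivAt)
    refine ⟨c, hc, ?_⟩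
    rw [hc']
    exact div_pos (sub_pos.2 (hmono hs.le (le_trans hs.le hst.le) hst)) (sub_pos.2 hst)
  -- derivative of g = a / a'
  have hgd : ∀ t : ℝ, 0 < t → deriv a t ≠ 0 →
      HasDerivAt (fun u => a u / deriv a u)
        ((deriv a t * deriv a t - a t * deriv (deriv a) t) / (deriv a t) ^ 2) t := by
    intro t ht hd
    exact (hdiff t ht).hasDerivAt.div (hddiff t ht).hasDerivAt hd
  have hgd_nonneg : ∀ t : ℝ, 0 < t → deriv a t ≠ 0 →
      0 ≤ (deriv a t * deriv a t - a t * deriv (deriv a) t) / (deriv a t) ^ 2 := by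
    intro t ht hd
    have hsq : (0:ℝ) < (deriv a t) ^ 2 := by positivity
    have h1 := hreg t ht
    rw [div_le_one hsq] at h1
    apply div_nonneg _ hsq.le
    nlinarith [sq_nonneg (deriv a t)]
  -- deriv a > 0 on (0, ∞)
  have dpos : ∀ t : ℝ, 0 < t → 0 < deriv a t := by
    intro t₀ ht₀
    rcases (dnonneg t₀ ht₀).lt_or_eq with h | h
    · exact h
    exfalso
    obtain ⟨t₁, ht₁mem, ht₁pos⟩ := hexists t₀ (t₀ + 1) ht₀ (by linarith)
    have ht₁0 : 0 < t₁ := lt_trans ht₀ ht₁mem.1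
    set Z := Icc t₀ t₁ ∩ deriv a ⁻¹' {0} with hZdef
    have hIccsub : Icc t₀ t₁ ⊆ Ioi 0 := fun x hx => lt_of_lt_of_le ht₀ hx.1
    have hZne : Z.Nonempty := ⟨t₀, ⟨le_rfl, ht₁mem.1.le⟩, h.symm⟩
    have hZbdd : BddAbove Z := (bddAbove_Icc).mono (inter_subset_left)
    have hZclosed : IsClosed Z :=
      (hdcont.mono hIccsub).preimage_isClosed_of_isClosed isClosed_Icc isClosed_singleton
    set s := sSup Z with hsdef
    have hsZ : s ∈ Z := hZclosed.csSup_mem hZne hZbdd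
    have hds : deriv a s = 0 := hsZ.2
    have hspos : 0 < s := lt_of_lt_of_le ht₀ hsZ.1.1
    have hs1 : s < t₁ := lt_of_le_of_ne hsZ.1.2 (fun he => ht₁pos.ne' (he ▸ hds))
    have hpos' : ∀ u, u ∈ Ioc s t₁ → 0 < deriv a u := by
      intro u hu
      have hu0 : 0 < u := lt_trans hspos hu.1
      rcases (dnonneg u hu0).lt_or_eq with h' | h'
      · exact h'
      · exfalso
        have huZ : u ∈ Z := ⟨⟨le_trans hsZ.1.1 hu.1.le, hu.2⟩, h'.symm⟩
        exact absurd (le_csSup hZbdd huZ) (not_le.2 hu.1)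
    have hgmono : MonotoneOn (fun u => a u / deriv a u) (Ioc s t₁) := by
      apply monotoneOn_of_deriv_nonneg (convex_Ioc s t₁)
      · exact ((hcont.mono fun x hx => (lt_trans hspos hx.1).le).div
          (hdcont.mono fun x hx => lt_trans hspos hx.1)
          fun x hx => (hpos' x hx).ne')
      · intro x hx
        rw [interior_Ioc] at hx
        have hx0 : 0 < x := lt_trans hspos hx.1
        exact ((hgd x hx0 (hpos' x ⟨hx.1, hx.2.le⟩).ne').differentiableAt).differentiableWithinAt
      · intro x hx
        rw [interior_Ioc] at hx
        have hx0 : 0 < x := lt_trans hspos hx.1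
        have hd : deriv a x ≠ 0 := (hpos' x ⟨hx.1, hx.2.le⟩).ne'
        rw [(hgd x hx0 hd).deriv]
        exact hgd_nonneg x hx0 hd
    set K := a t₁ / deriv a t₁ with hKdef
    have hK : 0 < K := div_pos (apos t₁ ht₁0) ht₁pos
    have haspos : 0 < a s := apos s hspos
    have hcs : ContinuousAt (deriv a) s :=
      hdcont.continuousAt (isOpen_Ioi.mem_nhds hspos)
    have htend : Tendsto (deriv a) (𝓝[>] s) (𝓝 0) := by
      rw [← hds]
      exact (hcs.tendsto).mono_left nhdsWithin_le_nhds
    have hev1 : ∀ᶠ u in 𝓝[>] s, deriv a u < a s / (2 * K) :=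
      htend.eventually_lt_const (by positivity)
    have hev2 : Ioo s t₁ ∈ 𝓝[>] s := Ioo_mem_nhdsGT_of_mem ⟨le_rfl, hs1⟩
    obtain ⟨u, hu1, hu2⟩ := (hev1.and hev2).exists
    have hu0 : 0 < u := lt_trans hspos hu2.1
    have hdu : 0 < deriv a u := hpos' u ⟨hu2.1, hu2.2.le⟩
    have hau : a s ≤ a u := (hmono hspos.le hu0.le hu2.1).le
    have hle : a u / deriv a u ≤ K :=
      hgmono ⟨hu2.1, hu2.2.le⟩ ⟨hs1, le_rfl⟩ hu2.2.le
    have h2K : 2 * K < a s / deriv a u := by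
      rw [lt_div_iff₀ hdu]
      have := (lt_div_iff₀ (by positivity : (0:ℝ) < 2 * K)).1 hu1
      linarith
    have h3 : a s / deriv a u ≤ a u / deriv a u := by gcongr
    linarith
  -- g is monotone on (0, ∞)
  have hgmono : MonotoneOn (fun u => a u / deriv a u) (Ioi 0) := by
    apply monotoneOn_of_deriv_nonneg (convex_Ioi 0)
    · exact (hcont.mono Ioi_subset_Ici_self).div hdcont fun x hx => (dpos x hx).ne'
    · intro x hx
      rw [interior_Ioi] at hx
      exact ((hgd x hx (dpos x hx).ne').differentiableAt).differentiableWithinAt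
    · intro x hx
      rw [interior_Ioi] at hx
      rw [(hgd x hx (dpos x hx).ne').deriv]
      exact hgd_nonneg x hx (dpos x hx).ne'
  -- main statement
  intro τ hτ
  have haτ : 0 < a τ := apos τ hτ
  have hdτ : 0 < deriv a τ := dpos τ hτ
  have hCnonneg : 0 ≤ Real.pi / 2 * (a τ / deriv a τ) := by
    have := Real.pi_pos
    positivity
  -- key bound on compact subintervals
  have key : ∀ u v : ℝ, 0 < u → u ≤ v → v < τ →
      (∫ t in u..v, a t / Real.sqrt ((a τ) ^ 2 - (a t) ^ 2)) ≤
        Real.pi / 2 * (a τ / deriv a τ) := by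
    intro u v hu huv hv
    have hsub0 : Icc u v ⊆ Ici (0:ℝ) := fun x hx => le_trans hu.le hx.1
    have hsubI : Icc u v ⊆ Ioi (0:ℝ) := fun x hx => lt_of_lt_of_le hu hx.1
    have hDpos : ∀ t ∈ Icc u v, 0 < (a τ) ^ 2 - (a t) ^ 2 := by
      intro t ht
      have ht0 : 0 < t := hsubI ht
      have h1 : a t < a τ := hmono ht0.le hτ.le (lt_of_le_of_lt ht.2 hv)
      have h2 : 0 ≤ a t := (apos t ht0).le
      nlinarith
    -- derivative of F = arcsin (a · / a τ)
    have hF : ∀ t ∈ Icc u v,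
        HasDerivAt (fun x => Real.arcsin (a x / a τ))
          (deriv a t / Real.sqrt ((a τ) ^ 2 - (a t) ^ 2)) t := by
      intro t ht
      have ht0 : 0 < t := hsubI ht
      have hat : 0 < a t := apos t ht0
      have halt : a t < a τ := hmono ht0.le hτ.le (lt_of_le_of_lt ht.2 hv)
      have hx1 : a t / a τ ≠ 1 := ne_of_lt ((div_lt_one haτ).2 halt)
      have hxm1 : a t / a τ ≠ -1 := by
        have : 0 < a t / a τ := by positivity
        linarith
      have h1 := (Real.hasDerivAt_arcsin hxm1 hx1).comp t
        ((hdiff t ht0).hasDerivAt.div_const (a τ))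
      refine h1.congr_deriv ?_
      have hD := hDpos t ht
      have h2 : (1:ℝ) - (a t / a τ) ^ 2 = ((a τ) ^ 2 - (a t) ^ 2) / (a τ) ^ 2 := by
        field_simp
      rw [h2, Real.sqrt_div hD.le, Real.sqrt_sq haτ.le]
      have hsD : 0 < Real.sqrt ((a τ) ^ 2 - (a t) ^ 2) := Real.sqrt_pos.2 hD
      field_simp
    -- continuity of integrands
    have hsqrt_cont : ContinuousOn (fun t => Real.sqrt ((a τ) ^ 2 - (a t) ^ 2)) (Icc u v) :=
      Real.continuous_sqrt.comp_continuousOn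
        (continuousOn_const.sub ((hcont.mono hsub0).pow 2))
    have hsqrt_ne : ∀ t ∈ Icc u v, Real.sqrt ((a τ) ^ 2 - (a t) ^ 2) ≠ 0 :=
      fun t ht => (Real.sqrt_pos.2 (hDpos t ht)).ne'
    have hfc : ContinuousOn (fun t => a t / Real.sqrt ((a τ) ^ 2 - (a t) ^ 2)) (Icc u v) :=
      (hcont.mono hsub0).div hsqrt_cont hsqrt_ne
    have hF'c : ContinuousOn (fun t => deriv a t / Real.sqrt ((a τ) ^ 2 - (a t) ^ 2)) (Icc u v) :=
      (hdcont.mono hsubI).div hsqrt_cont hsqrt_ne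
    have hfi : IntervalIntegrable (fun t => a t / Real.sqrt ((a τ) ^ 2 - (a t) ^ 2))
        volume u v := (hfc.mono (by rw [uIcc_of_le huv])).intervalIntegrable
    have hF'i : IntervalIntegrable (fun t => deriv a t / Real.sqrt ((a τ) ^ 2 - (a t) ^ 2))
        volume u v := (hF'c.mono (by rw [uIcc_of_le huv])).intervalIntegrable
    have hgi : IntervalIntegrable
        (fun t => (a τ / deriv a τ) * (deriv a t / Real.sqrt ((a τ) ^ 2 - (a t) ^ 2)))
        volume u v := (hF'i.const_mul _)
    have step1 : (∫ t in u..v, a t / Real.sqrt ((a τ) ^ 2 - (a t) ^ 2)) ≤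
        ∫ t in u..v, (a τ / deriv a τ) * (deriv a t / Real.sqrt ((a τ) ^ 2 - (a t) ^ 2)) := by
      apply intervalIntegral.integral_mono_on huv hfi hgi
      intro t ht
      have ht0 : 0 < t := hsubI ht
      have hd : deriv a t ≠ 0 := (dpos t ht0).ne'
      have heq : a t / Real.sqrt ((a τ) ^ 2 - (a t) ^ 2) =
          (a t / deriv a t) * (deriv a t / Real.sqrt ((a τ) ^ 2 - (a t) ^ 2)) := by
        rw [div_mul_div_comm, mul_comm (a t) (deriv a t), mul_div_mul_left _ _ hd]
      rw [heq]
      apply mul_le_mul_of_nonneg_right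
      · exact hgmono (mem_Ioi.2 ht0) (mem_Ioi.2 hτ) (le_of_lt (lt_of_le_of_lt ht.2 hv))
      · exact div_nonneg (dnonneg t ht0) (Real.sqrt_nonneg _)
    have step2 : (∫ t in u..v, (a τ / deriv a τ) *
          (deriv a t / Real.sqrt ((a τ) ^ 2 - (a t) ^ 2))) =
        (a τ / deriv a τ) * (Real.arcsin (a v / a τ) - Real.arcsin (a u / a τ)) := by
      rw [intervalIntegral.integral_const_mul,
        intervalIntegral.integral_eq_sub_of_hasDerivAt
          (fun t ht => hF t (by rwa [uIcc_of_le huv] at ht)) hF'i]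
    have step3 : Real.arcsin (a v / a τ) - Real.arcsin (a u / a τ) ≤ Real.pi / 2 := by
      have h1 : Real.arcsin (a v / a τ) ≤ Real.pi / 2 := Real.arcsin_le_pi_div_two _
      have h2 : 0 ≤ Real.arcsin (a u / a τ) :=
        Real.arcsin_nonneg.2 (div_nonneg (apos u hu).le haτ.le)
      linarith
    calc (∫ t in u..v, a t / Real.sqrt ((a τ) ^ 2 - (a t) ^ 2))
        ≤ (a τ / deriv a τ) * (Real.arcsin (a v / a τ) - Real.arcsin (a u / a τ)) := by
          rw [← step2]; exact step1
      _ ≤ (a τ / deriv a τ) * (Real.pi / 2) := by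
          apply mul_le_mul_of_nonneg_left step3 (by positivity)
      _ = Real.pi / 2 * (a τ / deriv a τ) := by ring
  -- case split on integrability
  by_cases hI : IntervalIntegrable (fun t => a t / Real.sqrt ((a τ) ^ 2 - (a t) ^ 2))
      volume 0 τ
  swap
  · rw [intervalIntegral.integral_undef hI]
    exact hCnonneg
  -- the limit argument
  rw [intervalIntegral.integral_of_le hτ.le, MeasureTheory.integral_Ioc_eq_integral_Ioo]
  set ε : ℕ → ℝ := fun n => τ / (2 * (n + 1)) with hεdef
  have hεpos : ∀ n : ℕ, 0 < ε n := by
    intro n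
    have : (0:ℝ) < 2 * (n + 1) := by positivity
    exact div_pos hτ this
  have hεle : ∀ n : ℕ, ε n ≤ τ / 2 := by
    intro n
    apply div_le_div_of_nonneg_left hτ.le (by norm_num)
    have : (0:ℝ) ≤ (n:ℝ) := Nat.cast_nonneg n
    linarith
  have hεanti : ∀ m n : ℕ, m ≤ n → ε n ≤ ε m := by
    intro m n hmn
    apply div_le_div_of_nonneg_left hτ.le (by positivity)
    have : (m:ℝ) ≤ (n:ℝ) := Nat.cast_le.2 hmn
    linarith
  have hmonoS : Monotone (fun n : ℕ => Ioo (ε n) (τ - ε n)) := by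
    intro m n hmn
    exact Ioo_subset_Ioo (hεanti m n hmn) (by linarith [hεanti m n hmn])
  have hunion : (⋃ n : ℕ, Ioo (ε n) (τ - ε n)) = Ioo 0 τ := by
    ext x
    simp only [mem_iUnion, mem_Ioo]
    constructor
    · rintro ⟨n, h1, h2⟩
      exact ⟨lt_trans (hεpos n) h1, lt_of_lt_of_le h2 (by linarith [hεpos n])⟩
    · rintro ⟨hx0, hxτ⟩
      set m := min x (τ - x) with hmdef
      have hm : 0 < m := lt_min hx0 (by linarith)
      obtain ⟨n, hn⟩ := exists_nat_gt (τ / (2 * m))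
      refine ⟨n, ?_, ?_⟩
      · have h1 : ε n < m := by
          rw [hεdef]
          rw [div_lt_iff₀ (by positivity)]
          have h2 : τ / (2 * m) < (n:ℝ) + 1 := lt_trans hn (by linarith)
          rw [div_lt_iff₀ (by positivity)] at h2
          nlinarith
        exact lt_of_lt_of_le h1 (min_le_left _ _)
      · have h1 : ε n < m := by
          rw [hεdef]
          rw [div_lt_iff₀ (by positivity)]
          have h2 : τ / (2 * m) < (n:ℝ) + 1 := lt_trans hn (by linarith)
          rw [div_lt_iff₀ (by positivity)] at h2
          nlinarith
        have := lt_of_lt_of_le h1 (min_le_right _ _)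
        linarith
  have hIoo : IntegrableOn (fun t => a t / Real.sqrt ((a τ) ^ 2 - (a t) ^ 2))
      (Ioo 0 τ) volume := by
    have h1 : IntegrableOn (fun t => a t / Real.sqrt ((a τ) ^ 2 - (a t) ^ 2))
        (Ioc 0 τ) volume := by
      rw [intervalIntegrable_iff] at hI
      rwa [uIoc_of_le hτ.le] at hI
    exact h1.mono_set Ioo_subset_Ioc_self
  have htend := MeasureTheory.tendsto_setIntegral_of_monotone
    (fun n : ℕ => measurableSet_Ioo) hmonoS (by rw [hunion]; exact hIoo)
  rw [hunion] at htend
  refine le_of_tendsto htend (Filter.Eventually.of_forall fun n => ?_)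
  have huv : ε n ≤ τ - ε n := by linarith [hεle n]
  have h1 : (∫ x in Ioo (ε n) (τ - ε n), a x / Real.sqrt ((a τ) ^ 2 - (a x) ^ 2)) =
      ∫ x in (ε n)..(τ - ε n), a x / Real.sqrt ((a τ) ^ 2 - (a x) ^ 2) := by
    rw [intervalIntegral.integral_of_le huv, MeasureTheory.integral_Ioc_eq_integral_Ioo]
  rw [h1]
  exact key (ε n) (τ - ε n) (hεpos n) huv (by linarith [hεpos n])
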